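/- Let E = EuclideanSpace ℝ (Fin n), N ≥ 1, u ∈ E with β := ‖u‖ < 1. Set N' := ⌈(1 − β)N/2⌉ − 1 and α := (1 − β)N/2 − N' (so α ∈ (0, 1]). Let X : Fin N → E be a sample, q̂ a minimizer of the empirical loss of X, l := max_i ρ_u(X_i, q̂) and R := l/(1 − β). If Y : Fin N → E differs from X in at most N' coordinates (card {i : Y_i ≠ X_i} ≤ N') and q̂' is any minimizer of the empirical loss of Y, then ‖q̂ − q̂'‖ ≤ R · max{2, (1 − β²)N/(2α) + (1 − β)}. (Euclidean case of Lemma A.4 with the explicit constant from its proof: corrupting fewer than ⌈(1 − β)N/2⌉ points cannot move the sample quantile beyond an explicit bound, so the breakdown point of any sample u-quantile function is at least ⌈(1 − β)N/2⌉/N.) -/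

import Mathlib

open MeasureTheory Filter Topology

/-- The data-based geometric quantile loss in Euclidean space:
`ρ_u(x,p) = ‖p − x‖ − ⟪u, p − x⟫`. -/
noncomputable def quantileLoss {n : ℕ} (u x p : EuclideanSpace ℝ (Fin n)) : ℝ :=
  ‖p - x‖ - inner ℝ u (p - x)

lemma quantileLoss_lb {n : ℕ} (u x p : EuclideanSpace ℝ (Fin n)) :
    (1 - ‖u‖) * ‖p - x‖ ≤ quantileLoss u x p := by
  have h := real_inner_le_norm u (p - x)
  unfold quantileLoss
  nlinarith [norm_nonneg (p - x)]

set_option maxHeartbeats 1000000 in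
/-- Euclidean case of Lemma A.4 with the explicit constant from its proof: corrupting at
most `N' = ⌈(1 − β)N/2⌉ − 1` of the data points moves any sample `u`-quantile by at most
`R · max {2, (1 − β²)N/(2α) + (1 − β)}`, where `l = maxᵢ ρ_u(Xᵢ, q̂)`, `R = l/(1 − β)`
and `α = (1 − β)N/2 − N'`.  Hence the breakdown point of any sample `u`-quantile
function is at least `⌈(1 − β)N/2⌉/N`. -/
theorem sample_quantile_breakdown_lower_bound
    {n : ℕ} (N : ℕ) [NeZero N]
    (u : EuclideanSpace ℝ (Fin n)) (β : ℝ) (hβ : β = ‖u‖) (hu : β < 1)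
    (N' : ℕ) (hN' : N' = ⌈(1 - β) * N / 2⌉₊ - 1)
    (α : ℝ) (hα : α = (1 - β) * N / 2 - N')
    (X : Fin N → EuclideanSpace ℝ (Fin n))
    (qhat : EuclideanSpace ℝ (Fin n))
    (hqhat : ∀ p : EuclideanSpace ℝ (Fin n),
      (N : ℝ)⁻¹ * ∑ i, quantileLoss u (X i) qhat
        ≤ (N : ℝ)⁻¹ * ∑ i, quantileLoss u (X i) p)
    (l R : ℝ) (hl : l = ⨆ i, quantileLoss u (X i) qhat) (hR : R = l / (1 - β))
    (Y : Fin N → EuclideanSpace ℝ (Fin n))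
    (hY : Set.ncard {i : Fin N | Y i ≠ X i} ≤ N')
    (qhat' : EuclideanSpace ℝ (Fin n))
    (hqhat' : ∀ p : EuclideanSpace ℝ (Fin n),
      (N : ℝ)⁻¹ * ∑ i, quantileLoss u (Y i) qhat'
        ≤ (N : ℝ)⁻¹ * ∑ i, quantileLoss u (Y i) p) :
    ‖qhat - qhat'‖ ≤ R * max 2 ((1 - β ^ 2) * N / (2 * α) + (1 - β)) := by
  classical
  by_contra hcon
  push_neg at hcon
  set D := ‖qhat - qhat'‖ with hD
  set M := max 2 ((1 - β ^ 2) * N / (2 * α) + (1 - β)) with hM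
  have hβ0 : 0 ≤ β := hβ ▸ norm_nonneg u
  have h1β : 0 < 1 - β := by linarith
  have hNpos : 0 < N := Nat.pos_of_ne_zero (NeZero.ne N)
  have hN0 : 0 < (N : ℝ) := by exact_mod_cast hNpos
  -- α ∈ (0,1]
  have hc : 0 < (1 - β) * N / 2 := by positivity
  have hceil : 1 ≤ ⌈(1 - β) * N / 2⌉₊ := Nat.ceil_pos.mpr hc
  have hN'cast : (N' : ℝ) = (⌈(1 - β) * N / 2⌉₊ : ℝ) - 1 := by
    rw [hN', Nat.cast_sub hceil, Nat.cast_one]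
  have hαpos : 0 < α := by
    have h2 : (⌈(1 - β) * N / 2⌉₊ : ℝ) < (1 - β) * N / 2 + 1 := Nat.ceil_lt_add_one hc.le
    rw [hα, hN'cast]; linarith
  -- l ≥ 0  and  ρ(Xᵢ, q̂) ≤ l
  have hbdd : BddAbove (Set.range fun i => quantileLoss u (X i) qhat) :=
    (Set.finite_range _).bddAbove
  have hlle : ∀ i, quantileLoss u (X i) qhat ≤ l := fun i => hl ▸ le_ciSup hbdd i
  have hl0 : 0 ≤ l := by
    have i0 : Fin N := ⟨0, hNpos⟩
    have h1 := quantileLoss_lb u (X i0) qhat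
    rw [← hβ] at h1
    have h2 : 0 ≤ (1 - β) * ‖qhat - X i0‖ := by positivity
    linarith [hlle i0]
  have hR0 : 0 ≤ R := by rw [hR]; positivity
  have hlR : (1 - β) * R = l := by rw [hR]; field_simp
  have hM2 : (2 : ℝ) ≤ M := le_max_left _ _
  have hMt : (1 - β ^ 2) * N / (2 * α) + (1 - β) ≤ M := le_max_right _ _
  have hDpos : 0 < D := lt_of_le_of_lt (by positivity) hcon
  -- g := (1-β)D - 2l > 0
  have hg : 0 < (1 - β) * D - 2 * l := by
    have h1 : 2 * R ≤ R * M := by nlinarith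
    have h2 : (1 - β) * (R * M) < (1 - β) * D := by
      exact mul_lt_mul_of_pos_left hcon h1β
    nlinarith
  -- key inequality:  l (N - N') < α D
  have hkey : l * ((N : ℝ) - N') < α * D := by
    have ht : R * ((1 - β ^ 2) * N / (2 * α) + (1 - β)) ≤ R * M :=
      mul_le_mul_of_nonneg_left hMt hR0
    have hlt : R * ((1 - β ^ 2) * N / (2 * α) + (1 - β)) < D := lt_of_le_of_lt ht hcon
    have step : α * (R * ((1 - β ^ 2) * N / (2 * α) + (1 - β))) < α * D :=
      mul_lt_mul_of_pos_left hlt hαpos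
    have e1 : α * ((1 - β ^ 2) * (N : ℝ) / (2 * α)) = (1 - β ^ 2) * N / 2 := by
      field_simp
    have e2 : R * ((1 - β ^ 2) * (N : ℝ) / 2 + (1 - β) * α) = l * ((N : ℝ) - N') := by
      rw [hα, ← hlR]; ring
    have heq : α * (R * ((1 - β ^ 2) * N / (2 * α) + (1 - β))) = l * ((N : ℝ) - N') := by
      calc α * (R * ((1 - β ^ 2) * N / (2 * α) + (1 - β)))
          = R * (α * ((1 - β ^ 2) * (N : ℝ) / (2 * α)) + (1 - β) * α) := by ring
        _ = R * ((1 - β ^ 2) * (N : ℝ) / 2 + (1 - β) * α) := by rw [e1]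
        _ = l * ((N : ℝ) - N') := e2
    linarith only [heq ▸ step]
  -- pointwise lower bounds for the loss differences
  have hbad : ∀ i : Fin N, -((1 + β) * D)
      ≤ quantileLoss u (Y i) qhat' - quantileLoss u (Y i) qhat := by
    intro i
    unfold quantileLoss
    have h1 : ‖qhat - Y i‖ - ‖qhat' - Y i‖ ≤ D := by
      have := norm_sub_norm_le (qhat - Y i) (qhat' - Y i)
      have h2 : qhat - Y i - (qhat' - Y i) = qhat - qhat' := by abel
      rw [h2] at this
      linarith
    have h2 : (inner ℝ u (qhat' - Y i) : ℝ) - inner ℝ u (qhat - Y i) = inner ℝ u (qhat' - qhat) := by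
      rw [← inner_sub_right]
      congr 1
      abel
    have h3 : (inner ℝ u (qhat' - qhat) : ℝ) ≤ β * D := by
      have := real_inner_le_norm u (qhat' - qhat)
      rw [norm_sub_rev] at this
      rw [hβ]
      exact this
    linarith
  have hgood : ∀ i : Fin N, Y i = X i →
      (1 - β) * D - 2 * l
        ≤ quantileLoss u (Y i) qhat' - quantileLoss u (Y i) qhat := by
    intro i hyi
    rw [hyi]
    have hlb := quantileLoss_lb u (X i) qhat'
    have hlb2 := quantileLoss_lb u (X i) qhat
    rw [← hβ] at hlb hlb2
    have hle := hlle i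
    have htri : D - ‖qhat - X i‖ ≤ ‖qhat' - X i‖ := by
      have := norm_sub_le_norm_sub_add_norm_sub qhat (X i) qhat'
      rw [norm_sub_rev (X i) qhat'] at this
      linarith
    have hm := mul_le_mul_of_nonneg_left htri h1β.le
    linarith only [hm, hlb, hlb2, hle]
  -- split the total sum
  set T := Finset.univ.filter (fun i : Fin N => Y i ≠ X i) with hT
  have hkN' : (T.card : ℝ) ≤ (N' : ℝ) := by
    have hset : {i : Fin N | Y i ≠ X i} = ↑T := by ext i; simp [hT]
    have := hY
    rw [hset, Set.ncard_coe_finset] at this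
    exact_mod_cast this
  set T' := Finset.univ.filter (fun i : Fin N => ¬ Y i ≠ X i) with hT'
  have hcards : T.card + T'.card = N := by
    rw [hT, hT']
    simpa using Finset.card_filter_add_card_filter_not
      (s := (Finset.univ : Finset (Fin N))) (p := fun i => Y i ≠ X i)
  have hsplit : ∑ i, (quantileLoss u (Y i) qhat' - quantileLoss u (Y i) qhat)
      = ∑ i ∈ T, (quantileLoss u (Y i) qhat' - quantileLoss u (Y i) qhat)
        + ∑ i ∈ T', (quantileLoss u (Y i) qhat' - quantileLoss u (Y i) qhat) :=
    (Finset.sum_filter_add_sum_filter_not Finset.univ _ _).symm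
  have hTbound : (T.card : ℝ) * (-((1 + β) * D))
      ≤ ∑ i ∈ T, (quantileLoss u (Y i) qhat' - quantileLoss u (Y i) qhat) := by
    have := Finset.card_nsmul_le_sum T
      (fun i => quantileLoss u (Y i) qhat' - quantileLoss u (Y i) qhat)
      (-((1 + β) * D)) (fun i _ => hbad i)
    simpa [nsmul_eq_mul] using this
  have hT'bound : (T'.card : ℝ) * ((1 - β) * D - 2 * l)
      ≤ ∑ i ∈ T', (quantileLoss u (Y i) qhat' - quantileLoss u (Y i) qhat) := by
    have := Finset.card_nsmul_le_sum T'
      (fun i => quantileLoss u (Y i) qhat' - quantileLoss u (Y i) qhat)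
      ((1 - β) * D - 2 * l)
      (fun i hi => hgood i (by simpa [hT'] using (Finset.mem_filter.mp hi).2))
    simpa [nsmul_eq_mul] using this
  have hT'card : (T'.card : ℝ) = (N : ℝ) - T.card := by
    have : (T.card : ℝ) + T'.card = (N : ℝ) := by exact_mod_cast hcards
    linarith
  rw [hT'card] at hT'bound
  -- total sum is positive
  have hpos : 0 < ∑ i, (quantileLoss u (Y i) qhat' - quantileLoss u (Y i) qhat) := by
    rw [hsplit]
    have hid : ((N : ℝ) - N') * ((1 - β) * D - 2 * l) - (N' : ℝ) * ((1 + β) * D)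
        = 2 * (α * D - l * ((N : ℝ) - N')) := by
      rw [hα]; ring
    have hb0 : (0:ℝ) ≤ (1 + β) * D := mul_nonneg (by linarith only [hβ0]) hDpos.le
    have hnn : 0 ≤ ((N' : ℝ) - T.card) * (((1 - β) * D - 2 * l) + (1 + β) * D) :=
      mul_nonneg (by linarith only [hkN']) (by linarith only [hg, hb0])
    have h1 : (N' : ℝ) * (-((1 + β) * D)) + ((N : ℝ) - N') * ((1 - β) * D - 2 * l)
        ≤ (T.card : ℝ) * (-((1 + β) * D)) + ((N : ℝ) - T.card) * ((1 - β) * D - 2 * l) := by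
      linarith only [hnn]
    linarith only [hTbound, hT'bound, hkey, hid, h1]
  have hsum : ∑ i, quantileLoss u (Y i) qhat < ∑ i, quantileLoss u (Y i) qhat' := by
    rw [Finset.sum_sub_distrib] at hpos
    linarith only [hpos]
  have hmin := hqhat' qhat
  have hinv : 0 < (N : ℝ)⁻¹ := by positivity
  have := mul_lt_mul_of_pos_left hsum hinv
  linarith only [hmin, this]
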